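/- For every semiring S, the semisubtractive space Id_s(S) is sober: every nonempty irreducible closed subset of Id_s(S) has a unique generic point (i.e., there is a unique point whose closure is that set). -/

import Mathlib

/-- An ideal `a` of a commutative semiring is *semisubtractive* if for every `x ∈ a`
having an additive inverse `y` (i.e. `x + y = 0`), the inverse `y` also lies in `a`. -/
def IsSemisubtractive {S : Type*} [CommSemiring S] (a : Ideal S) : Prop :=
  ∀ x ∈ a, ∀ y : S, x + y = 0 → y ∈ a

/-- The set `Id_s(S)` of semisubtractive ideals of `S`. -/
def SSIdeal (S : Type*) [CommSemiring S] : Type _ :=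
  {a : Ideal S // IsSemisubtractive a}

/-- The subbasic closed set `h(a) = {b ∈ Id_s(S) : a ⊆ b}`. -/
def hSet {S : Type*} [CommSemiring S] (a : SSIdeal S) : Set (SSIdeal S) :=
  {b : SSIdeal S | a.1 ≤ b.1}

/-- The semisubtractive topology on `Id_s(S)`: generated by taking the sets `h(a)` as a
subbasis of closed sets, i.e. generated by the open sets `h(a)ᶜ`. -/
instance ssTopology (S : Type*) [CommSemiring S] : TopologicalSpace (SSIdeal S) :=
  TopologicalSpace.generateFrom {U : Set (SSIdeal S) | ∃ a : SSIdeal S, U = (hSet a)ᶜ}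

section Aux
variable {S : Type*} [CommSemiring S]

lemma hSet_isClosed (a : SSIdeal S) : IsClosed (hSet a) :=
  ⟨TopologicalSpace.GenerateOpen.basic _ ⟨a, rfl⟩⟩

lemma isOpen_lower {U : Set (SSIdeal S)} (hU : IsOpen U) :
    ∀ a b : SSIdeal S, a.1 ≤ b.1 → b ∈ U → a ∈ U := by
  have hU' : TopologicalSpace.GenerateOpen
      {U : Set (SSIdeal S) | ∃ a : SSIdeal S, U = (hSet a)ᶜ} U := hU
  clear hU
  induction hU' with
  | basic V hV =>
    obtain ⟨c, rfl⟩ := hV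
    intro a b hab hb hc
    exact hb (hc.trans hab)
  | univ => intro a b _ _; trivial
  | inter U V _ _ ihU ihV =>
    intro a b hab hb
    exact ⟨ihU a b hab hb.1, ihV a b hab hb.2⟩
  | sUnion s _ ih =>
    rintro a b hab ⟨V, hV, hbV⟩
    exact ⟨V, hV, ih V hV a b hab hbV⟩

lemma isClosed_upper {C : Set (SSIdeal S)} (hC : IsClosed C) :
    ∀ a ∈ C, ∀ b : SSIdeal S, a.1 ≤ b.1 → b ∈ C := by
  intro a ha b hab
  by_contra hb
  exact isOpen_lower hC.isOpen_compl a b hab hb ha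

lemma closure_singleton_eq (a : SSIdeal S) : closure {a} = hSet a := by
  apply Set.Subset.antisymm
  · exact closure_minimal (Set.singleton_subset_iff.mpr (le_refl a.1)) (hSet_isClosed a)
  · intro b hb
    exact isClosed_upper isClosed_closure a (subset_closure (Set.mem_singleton a)) b hb

lemma exists_subbasic_cover {D : Set (SSIdeal S)} (hD : IsPreirreducible D)
    (hne : D.Nonempty) {f : Set (Set (SSIdeal S))} (hfin : f.Finite) :
    f ⊆ {U : Set (SSIdeal S) | ∃ a : SSIdeal S, U = (hSet a)ᶜ} →
    D ⊆ (⋂₀ f)ᶜ → ∃ V ∈ f, D ⊆ Vᶜ := by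
  refine Set.Finite.induction_on (motive := fun f _ =>
      f ⊆ {U : Set (SSIdeal S) | ∃ a : SSIdeal S, U = (hSet a)ᶜ} →
      D ⊆ (⋂₀ f)ᶜ → ∃ V ∈ f, D ⊆ Vᶜ) f hfin ?_ ?_
  · intro _ hsub
    simp at hsub
    exact absurd hsub (by rintro rfl; exact hne.ne_empty rfl)
  · intro V g hVg hgfin ih hfsub hsub
    obtain ⟨c, hc⟩ := hfsub (Set.mem_insert V g)
    have hgsub : g ⊆ _ := fun U hU => hfsub (Set.mem_insert_of_mem V hU)
    have hopen : IsOpen (⋂₀ g) := by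
      apply Set.Finite.isOpen_sInter hgfin
      intro U hU
      exact TopologicalSpace.GenerateOpen.basic _ (hgsub hU)
    have hVclosed : IsClosed Vᶜ := by
      rw [hc, compl_compl]; exact hSet_isClosed c
    have hsub' : D ⊆ Vᶜ ∪ (⋂₀ g)ᶜ := by
      intro b hb
      have := hsub hb
      rw [Set.sInter_insert] at this
      by_cases hbV : b ∈ V
      · right; intro hbg; exact this ⟨hbV, hbg⟩
      · left; exact hbV
    rcases (isPreirreducible_iff_isClosed_union_isClosed.mp hD) Vᶜ (⋂₀ g)ᶜ
        hVclosed hopen.isClosed_compl hsub' with h | h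
    · exact ⟨V, Set.mem_insert V g, h⟩
    · obtain ⟨W, hWg, hW⟩ := ih hgsub h
      exact ⟨W, Set.mem_insert_of_mem V hWg, hW⟩

end Aux

/-- Every semisubtractive space is sober: every nonempty irreducible closed subset has
a unique generic point. -/
theorem ssSpace_sober {S : Type*} [CommSemiring S] [Nontrivial S]
    (D : Set (SSIdeal S)) (hD : IsIrreducible D) (hDclosed : IsClosed D) :
    ∃! a : SSIdeal S, closure {a} = D := by
  obtain ⟨hne, hirr⟩ := hD
  have haSS : IsSemisubtractive (⨅ b ∈ D, (b : SSIdeal S).1) := by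
    intro x hx y hxy
    simp only [Ideal.mem_iInf] at hx ⊢
    intro b hb
    exact b.2 x (hx b hb) y hxy
  set a : SSIdeal S := ⟨⨅ b ∈ D, (b : SSIdeal S).1, haSS⟩ with ha
  have hDsub : D ⊆ hSet a := fun b hb => show a.1 ≤ b.1 from iInf₂_le b hb
  have haD : a ∈ D := by
    by_contra haD
    obtain ⟨U, hU, haU, hUsub⟩ :=
      (TopologicalSpace.isTopologicalBasis_of_subbasis rfl).exists_subset_of_mem_open
        (show a ∈ Dᶜ from haD) hDclosed.isOpen_compl
    obtain ⟨f, ⟨hfin, hfsub⟩, rfl⟩ := hU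
    have hDU : D ⊆ (⋂₀ f)ᶜ := fun b hb hbf => hUsub hbf hb
    obtain ⟨V, hVf, hV⟩ := exists_subbasic_cover hirr hne hfin hfsub hDU
    obtain ⟨c, rfl⟩ := hfsub hVf
    have hca : c.1 ≤ a.1 := le_iInf₂ fun b hb => by
      have := hV hb; rw [compl_compl] at this; exact this
    exact (Set.mem_sInter.mp haU _ hVf) hca
  have hD_eq : D = hSet a :=
    Set.Subset.antisymm hDsub (fun b hb => isClosed_upper hDclosed a haD b hb)
  refine ⟨a, ?_, ?_⟩
  · show closure {a} = D
    rw [closure_singleton_eq, hD_eq]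
  intro b hb
  have : hSet b = hSet a := by rw [← closure_singleton_eq, hb, hD_eq]
  have h1 : a.1 ≤ b.1 := by
    have hb' : b ∈ hSet a := this ▸ (show b ∈ hSet b from le_refl b.1)
    exact hb'
  have h2 : b.1 ≤ a.1 := by
    have ha' : a ∈ hSet b := this.symm ▸ (show a ∈ hSet a from le_refl a.1)
    exact ha'
  exact Subtype.ext (le_antisymm h2 h1)
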